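/- arXiv:2512.20540 — 2 statements merged into one kernel-verified Lean document; each statement's English description precedes it below -/
import Mathlib

section
/- For every integer n ≥ 1 there exists a constant C > 0, depending only on n, with the following property: for all functions f_1, …, f_n : ℂ → ℂ that are holomorphic on some open set containing the closed unit disc, and all points z_1, …, z_n on the unit circle, |det( f_i(z_j) )_{1≤i,j≤n}| ≤ C · ∏_{1≤i<j≤n} |z_j − z_i| · ∏_{i=1}^{n} max_{1≤j≤n} sup_{|z|=1} |f_i^{(j−1)}(z)|, where f^{(m)} denotes the m-th iterated complex derivative. -/
open scoped BigOperators

open Metric Set Finset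

noncomputable section DetBoundAux

namespace DetBoundAux

/-- Iterated derivatives of a holomorphic function are differentiable on an open set. -/
lemma iteratedDeriv_differentiableOn {U : Set ℂ} (hU : IsOpen U) {f : ℂ → ℂ}
    (hf : DifferentiableOn ℂ f U) (j : ℕ) :
    DifferentiableOn ℂ (iteratedDeriv j f) U := by
  induction j generalizing f with
  | zero => simpa using hf
  | succ j ih =>
    rw [iteratedDeriv_succ']
    exact ih ((hf.analyticOnNhd hU).deriv.differentiableOn)

lemma hasDerivAt_iteratedDeriv {U : Set ℂ} (hU : IsOpen U) {f : ℂ → ℂ}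
    (hf : DifferentiableOn ℂ f U) (j : ℕ) {w : ℂ} (hw : w ∈ U) :
    HasDerivAt (iteratedDeriv j f) (iteratedDeriv (j + 1) f w) w := by
  rw [iteratedDeriv_succ]
  exact ((iteratedDeriv_differentiableOn hU hf j).differentiableAt
    (hU.mem_nhds hw)).hasDerivAt

/-- Mean value inequality on a convex set, deriv version over ℂ. -/
lemma mvt_seg {g d : ℂ → ℂ} {x y : ℂ} {s : Set ℂ} (hs : Convex ℝ s)
    (hg : ∀ u ∈ s, HasDerivAt g (d u) u) {C : ℝ} (hC : ∀ u ∈ s, ‖d u‖ ≤ C)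
    (hx : x ∈ s) (hy : y ∈ s) : ‖g y - g x‖ ≤ C * ‖y - x‖ := by
  refine hs.norm_image_sub_le_of_norm_hasFDerivWithin_le
    (f' := fun u => ContinuousLinearMap.smulRight (1 : ℂ →L[ℂ] ℂ) (d u))
    (fun u hu => (hg u hu).hasFDerivAt.hasFDerivWithinAt) (fun u hu => ?_) hx hy
  rw [ContinuousLinearMap.norm_smulRight_apply]
  have h1 : ‖(1 : ℂ →L[ℂ] ℂ)‖ = 1 := by
    rw [ContinuousLinearMap.one_def, ContinuousLinearMap.norm_id]
  rw [h1, one_mul]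
  exact hC u hu

lemma norm_sub_le_of_mem_segment {x y u : ℂ} (hu : u ∈ segment ℝ x y) :
    ‖u - x‖ ≤ ‖y - x‖ := by
  rcases hu with ⟨a, b, ha, hb, hab, rfl⟩
  have h1 : a • x + b • y - x = b • (y - x) := by
    rw [show a = 1 - b by linarith, sub_smul, one_smul, smul_sub]
    abel
  rw [h1, norm_smul]
  have : ‖(b : ℝ)‖ ≤ 1 := by rw [Real.norm_eq_abs, abs_of_nonneg hb]; linarith
  calc ‖(b:ℝ)‖ * ‖y - x‖ ≤ 1 * ‖y - x‖ :=
        mul_le_mul_of_nonneg_right this (norm_nonneg _)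
    _ = ‖y - x‖ := one_mul _

/-- Taylor remainder bound on the closed unit ball, via iterated mean value inequality. -/
lemma taylor_bound {U : Set ℂ} (hU : IsOpen U) (hBU : closedBall (0 : ℂ) 1 ⊆ U) :
    ∀ (j : ℕ) (f : ℂ → ℂ), DifferentiableOn ℂ f U → ∀ M : ℝ,
      (∀ w ∈ closedBall (0 : ℂ) 1, ‖iteratedDeriv (j + 1) f w‖ ≤ M) →
      ∀ x ∈ closedBall (0 : ℂ) 1, ∀ y ∈ closedBall (0 : ℂ) 1,
        ‖f y - ∑ i ∈ Finset.range (j + 1),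
            (y - x) ^ i / (i.factorial : ℂ) * iteratedDeriv i f x‖
          ≤ M * ‖y - x‖ ^ (j + 1) := by
  intro j
  induction j with
  | zero =>
    intro f hf M hM x hx y hy
    have hsum : ∑ i ∈ Finset.range 1,
        (y - x) ^ i / (i.factorial : ℂ) * iteratedDeriv i f x = f x := by
      simp
    rw [hsum, pow_one]
    refine mvt_seg (convex_closedBall _ _) (d := fun u => iteratedDeriv 1 f u)
      (fun u hu => ?_) (fun u hu => hM u hu) hx hy
    rw [iteratedDeriv_one]
    exact (hf.differentiableAt (hU.mem_nhds (hBU hu))).hasDerivAt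
  | succ j ih =>
    intro f hf M hM x hx y hy
    set φ : ℂ → ℂ := fun u => f u - ∑ i ∈ Finset.range (j + 2),
      (u - x) ^ i / (i.factorial : ℂ) * iteratedDeriv i f x with hφ
    set d : ℂ → ℂ := fun u => deriv f u - ∑ i ∈ Finset.range (j + 1),
      (u - x) ^ i / (i.factorial : ℂ) * iteratedDeriv i (deriv f) x with hd
    have hderiv : ∀ u ∈ closedBall (0 : ℂ) 1, HasDerivAt φ (d u) u := by
      intro u hu
      have h1 : HasDerivAt f (deriv f u) u :=
        (hf.differentiableAt (hU.mem_nhds (hBU hu))).hasDerivAt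
      have h2 : HasDerivAt (fun u => ∑ i ∈ Finset.range (j + 2),
          (u - x) ^ i / (i.factorial : ℂ) * iteratedDeriv i f x)
          (∑ i ∈ Finset.range (j + 2),
            ((i : ℂ) * (u - x) ^ (i - 1) * 1 / (i.factorial : ℂ)) * iteratedDeriv i f x) u := by
        refine HasDerivAt.fun_sum fun i _ => ?_
        exact ((((hasDerivAt_id u).sub_const x).pow i).div_const _).mul_const _
      have h3 : (∑ i ∈ Finset.range (j + 2),
          ((i : ℂ) * (u - x) ^ (i - 1) * 1 / (i.factorial : ℂ)) * iteratedDeriv i f x)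
          = ∑ i ∈ Finset.range (j + 1),
            (u - x) ^ i / (i.factorial : ℂ) * iteratedDeriv i (deriv f) x := by
        have hterm : ∀ i : ℕ,
            (((i + 1 : ℕ) : ℂ) * (u - x) ^ ((i + 1) - 1) * 1 / (((i + 1 : ℕ).factorial : ℕ) : ℂ))
              * iteratedDeriv (i + 1) f x
            = (u - x) ^ i / (i.factorial : ℂ) * iteratedDeriv i (deriv f) x := by
          intro i
          have hfac : (((i + 1).factorial : ℕ) : ℂ) = ((i : ℂ) + 1) * (i.factorial : ℂ) := by
            rw [Nat.factorial_succ]; push_cast; ring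
          have hne : ((i.factorial : ℂ)) ≠ 0 := Nat.cast_ne_zero.mpr (Nat.factorial_ne_zero _)
          have hne1 : ((i : ℂ) + 1) ≠ 0 := Nat.cast_add_one_ne_zero (R := ℂ) i
          have hit : iteratedDeriv (i + 1) f x = iteratedDeriv i (deriv f) x := by
            rw [iteratedDeriv_succ']
          rw [hit]
          rw [Nat.add_sub_cancel]
          rw [hfac]
          push_cast
          field_simp
        rw [Finset.sum_range_succ' (fun i =>
          ((i : ℂ) * (u - x) ^ (i - 1) * 1 / (i.factorial : ℂ)) * iteratedDeriv i f x)]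
        have h0 : (((0 : ℕ) : ℂ) * (u - x) ^ (0 - 1) * 1 / ((Nat.factorial 0 : ℕ) : ℂ))
            * iteratedDeriv 0 f x = 0 := by simp
        rw [h0, add_zero]
        exact Finset.sum_congr rfl fun i _ => hterm i
      have h4 := h1.fun_sub h2
      rw [h3] at h4
      simpa [hφ, hd] using h4
    have hφx : φ x = 0 := by
      rw [hφ]
      simp only [sub_self]
      rw [Finset.sum_eq_single 0]
      · simp
      · intro i _ hi
        simp [zero_pow hi]
      · simp
    have hdbound : ∀ u ∈ segment ℝ x y, ‖d u‖ ≤ M * ‖y - x‖ ^ (j + 1) := by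
      intro u hu
      have husub : u ∈ closedBall (0 : ℂ) 1 :=
        (convex_closedBall (0:ℂ) 1).segment_subset hx hy hu
      have hdf : DifferentiableOn ℂ (deriv f) U :=
        (hf.analyticOnNhd hU).deriv.differentiableOn
      have hM' : ∀ w ∈ closedBall (0 : ℂ) 1, ‖iteratedDeriv (j + 1) (deriv f) w‖ ≤ M := by
        intro w hw
        rw [← iteratedDeriv_succ']
        exact hM w hw
      have := ih (deriv f) hdf M hM' x hx u husub
      refine this.trans ?_
      have h1 : ‖u - x‖ ≤ ‖y - x‖ := norm_sub_le_of_mem_segment hu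
      have hMnn : 0 ≤ M := le_trans (norm_nonneg _) (hM x hx)
      exact mul_le_mul_of_nonneg_left (pow_le_pow_left₀ (norm_nonneg _) h1 _) hMnn
    have hseg : segment ℝ x y ⊆ closedBall (0 : ℂ) 1 :=
      (convex_closedBall (0:ℂ) 1).segment_subset hx hy
    have := mvt_seg (convex_segment x y)
      (fun u hu => hderiv u (hseg hu)) hdbound
      (left_mem_segment ℝ x y) (right_mem_segment ℝ x y)
    rw [hφx, sub_zero] at this
    calc ‖φ y‖ ≤ M * ‖y - x‖ ^ (j + 1) * ‖y - x‖ := this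
      _ = M * ‖y - x‖ ^ (j + 2) := by ring

/-- Telescoping sum used for differentiating Taylor-type sums. -/
lemma telescope_sum (a w : ℂ) (d : ℕ → ℂ) : ∀ j : ℕ,
    ∑ i ∈ Finset.range (j + 1),
      (((i : ℂ) * (a - w) ^ (i - 1) * (-1)) / (i.factorial : ℂ) * d i
        + (a - w) ^ i / (i.factorial : ℂ) * d (i + 1))
      = (a - w) ^ j / (j.factorial : ℂ) * d (j + 1) := by
  intro j
  induction j with
  | zero => simp
  | succ j ih =>
    rw [Finset.sum_range_succ, ih]
    have hfac : ((j + 1).factorial : ℂ) = ((j : ℂ) + 1) * (j.factorial : ℂ) := by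
      rw [Nat.factorial_succ]; push_cast; ring
    have hne : ((j.factorial : ℂ)) ≠ 0 := Nat.cast_ne_zero.mpr (Nat.factorial_ne_zero _)
    have hne1 : ((j : ℂ) + 1) ≠ 0 := Nat.cast_add_one_ne_zero (R := ℂ) j
    have hsub : (j + 1 : ℕ) - 1 = j := rfl
    rw [hsub]
    push_cast [hfac]
    field_simp
    ring

/-- Formula for the iterated derivatives of `dslope` away from the base point. -/
lemma dslope_iteratedDeriv_formula {U : Set ℂ} (hU : IsOpen U) {f : ℂ → ℂ}
    (hf : DifferentiableOn ℂ f U) (a : ℂ) :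
    ∀ (j : ℕ) (w : ℂ), w ∈ U → w ≠ a →
      iteratedDeriv j (dslope f a) w =
        (j.factorial : ℂ) * (f a - ∑ i ∈ Finset.range (j + 1),
            (a - w) ^ i / (i.factorial : ℂ) * iteratedDeriv i f w) / (a - w) ^ (j + 1) := by
  intro j
  induction j with
  | zero =>
    intro w hw hwa
    have haw : a - w ≠ 0 := sub_ne_zero.mpr (Ne.symm hwa)
    rw [iteratedDeriv_zero, dslope_of_ne f hwa, slope_def_field]
    simp only [zero_add, Finset.sum_range_one, pow_zero, Nat.factorial_zero, Nat.cast_one,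
      iteratedDeriv_zero, pow_one, one_div, one_mul]
    have hwa' : w - a ≠ 0 := sub_ne_zero.mpr hwa
    field_simp
    ring
  | succ j ih =>
    intro w hw hwa
    have haw : a - w ≠ 0 := sub_ne_zero.mpr (Ne.symm hwa)
    have hV : IsOpen (U \ {a}) := hU.sdiff isClosed_singleton
    have hwV : w ∈ U \ {a} := ⟨hw, hwa⟩
    rw [iteratedDeriv_succ]
    have heq : deriv (iteratedDeriv j (dslope f a)) w
        = deriv (fun u => (j.factorial : ℂ) * (f a - ∑ i ∈ Finset.range (j + 1),
            (a - u) ^ i / (i.factorial : ℂ) * iteratedDeriv i f u) / (a - u) ^ (j + 1)) w := by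
      apply Filter.EventuallyEq.deriv_eq
      filter_upwards [hV.mem_nhds hwV] with u hu
      exact ih u hu.1 hu.2
    rw [heq]
    -- now compute the derivative of the explicit formula
    have hsum : HasDerivAt (fun u => ∑ i ∈ Finset.range (j + 1),
        (a - u) ^ i / (i.factorial : ℂ) * iteratedDeriv i f u)
        ((a - w) ^ j / (j.factorial : ℂ) * iteratedDeriv (j + 1) f w) w := by
      have h : HasDerivAt (fun u => ∑ i ∈ Finset.range (j + 1),
          (a - u) ^ i / (i.factorial : ℂ) * iteratedDeriv i f u)
          (∑ i ∈ Finset.range (j + 1),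
            ((((i : ℂ) * (a - w) ^ (i - 1) * (-1)) / (i.factorial : ℂ)) * iteratedDeriv i f w
              + (a - w) ^ i / (i.factorial : ℂ) * iteratedDeriv (i + 1) f w)) w :=
        HasDerivAt.fun_sum fun i _ =>
          ((((hasDerivAt_id w).const_sub a).pow i).div_const _).mul
            (hasDerivAt_iteratedDeriv hU hf i hw)
      rw [telescope_sum a w (fun i => iteratedDeriv i f w) j] at h
      exact h
    have hR : HasDerivAt (fun u => (j.factorial : ℂ) * (f a - ∑ i ∈ Finset.range (j + 1),
        (a - u) ^ i / (i.factorial : ℂ) * iteratedDeriv i f u))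
        ((j.factorial : ℂ) * (0 - ((a - w) ^ j / (j.factorial : ℂ) * iteratedDeriv (j + 1) f w))) w :=
      ((hasDerivAt_const w (f a)).sub hsum).const_mul _
    have hD : HasDerivAt (fun u => (a - u) ^ (j + 1))
        (((j : ℂ) + 1) * (a - w) ^ j * (-1)) w := by
      have := ((hasDerivAt_id w).const_sub a).fun_pow (j + 1)
      simpa using this
    have hDne : (a - w) ^ (j + 1) ≠ 0 := pow_ne_zero _ haw
    have hdiv := hR.fun_div hD hDne
    rw [hdiv.deriv]
    have hfacne : ((j.factorial : ℂ)) ≠ 0 := Nat.cast_ne_zero.mpr (Nat.factorial_ne_zero _)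
    have hfac : (((j + 1).factorial : ℂ)) = ((j : ℂ) + 1) * (j.factorial : ℂ) := by
      rw [Nat.factorial_succ]; push_cast; ring
    have hne1 : ((j : ℂ) + 1) ≠ 0 := Nat.cast_add_one_ne_zero (R := ℂ) j
    rw [Finset.sum_range_succ (fun i => (a - w) ^ i / (i.factorial : ℂ) * iteratedDeriv i f w)
      (j + 1)]
    push_cast [hfac]
    field_simp
    ring

/-- Key analytic bound: iterated derivatives of `dslope f a` on the closed unit ball
are controlled by the next derivative of `f`. -/
lemma dslope_bound {U : Set ℂ} (hU : IsOpen U) (hBU : closedBall (0 : ℂ) 1 ⊆ U) {f : ℂ → ℂ}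
    (hf : DifferentiableOn ℂ f U) {a : ℂ} (ha : a ∈ closedBall (0 : ℂ) 1)
    (j : ℕ) {M : ℝ} (hM : ∀ w ∈ closedBall (0 : ℂ) 1, ‖iteratedDeriv (j + 1) f w‖ ≤ M) :
    ∀ w ∈ closedBall (0 : ℂ) 1, ‖iteratedDeriv j (dslope f a) w‖ ≤ (j.factorial : ℝ) * M := by
  have key : ∀ w ∈ closedBall (0 : ℂ) 1, w ≠ a →
      ‖iteratedDeriv j (dslope f a) w‖ ≤ (j.factorial : ℝ) * M := by
    intro w hw hwa
    have haw : a - w ≠ 0 := sub_ne_zero.mpr (Ne.symm hwa)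
    rw [dslope_iteratedDeriv_formula hU hf a j w (hBU hw) hwa]
    rw [norm_div, norm_mul, norm_pow]
    have hT := taylor_bound hU hBU j f hf M hM w hw a ha
    have hpos : (0 : ℝ) < ‖a - w‖ ^ (j + 1) := pow_pos (norm_pos_iff.mpr haw) _
    rw [div_le_iff₀ hpos]
    have hnf : ‖(j.factorial : ℂ)‖ = (j.factorial : ℝ) := by
      rw [Complex.norm_natCast]
    rw [hnf]
    calc (j.factorial : ℝ) * ‖f a - ∑ i ∈ Finset.range (j + 1),
          (a - w) ^ i / (i.factorial : ℂ) * iteratedDeriv i f w‖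
        ≤ (j.factorial : ℝ) * (M * ‖a - w‖ ^ (j + 1)) := by
          exact mul_le_mul_of_nonneg_left hT (by positivity)
      _ = (j.factorial : ℝ) * M * ‖a - w‖ ^ (j + 1) := by ring
  intro w hw
  rcases eq_or_ne w a with rfl | hwa
  · -- limit argument at the base point
    have haU : w ∈ U := hBU hw
    have hdsl : DifferentiableOn ℂ (dslope f w) U :=
      (Complex.differentiableOn_dslope (hU.mem_nhds haU)).mpr hf
    have hcont : ContinuousAt (iteratedDeriv j (dslope f w)) w :=
      ((iteratedDeriv_differentiableOn hU hdsl j).differentiableAt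
        (hU.mem_nhds haU)).continuousAt
    set b : ℂ := if w = 0 then 1 else 0 with hb
    have hbB : b ∈ closedBall (0 : ℂ) 1 := by
      rw [hb]; split <;> simp
    have hbw : b ≠ w := by
      rw [hb]; split
      · rename_i h; rw [h]; norm_num
      · rename_i h; exact Ne.symm h
    set u : ℕ → ℂ := fun m => w + ((m + 1 : ℝ))⁻¹ • (b - w) with hu
    have huB : ∀ m, u m ∈ closedBall (0 : ℂ) 1 := by
      intro m
      have ht0 : (0:ℝ) ≤ ((m + 1 : ℝ))⁻¹ := by positivity
      have ht1 : ((m + 1 : ℝ))⁻¹ ≤ 1 := by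
        rw [inv_le_one_iff₀]; right; linarith [Nat.cast_nonneg (α := ℝ) m]
      have := (convex_closedBall (0:ℂ) 1) hw hbB (a := 1 - ((m + 1 : ℝ))⁻¹)
        (b := ((m + 1 : ℝ))⁻¹) (by linarith) ht0 (by ring)
      convert this using 1
      rw [hu]
      simp only
      rw [smul_sub, sub_smul, one_smul]
      abel
    have hune : ∀ m, u m ≠ w := by
      intro m
      rw [hu]
      simp only
      intro hcontra
      have : ((m + 1 : ℝ))⁻¹ • (b - w) = 0 := by
        have := sub_eq_zero.mpr hcontra
        rw [add_sub_cancel_left] at this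
        exact this
      rcases smul_eq_zero.mp this with h | h
      · have : ((m:ℝ) + 1) ≠ 0 := by positivity
        exact absurd h (inv_ne_zero this)
      · exact hbw (sub_eq_zero.mp h)
    have hulim : Filter.Tendsto u Filter.atTop (nhds w) := by
      have h1 : Filter.Tendsto (fun m : ℕ => ((m + 1 : ℝ))⁻¹) Filter.atTop (nhds 0) := by
        have := tendsto_one_div_add_atTop_nhds_zero_nat (𝕜 := ℝ)
        simpa [one_div] using this
      have h2 : Filter.Tendsto (fun m : ℕ => ((m + 1 : ℝ))⁻¹ • (b - w))
          Filter.atTop (nhds 0) := by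
        have := h1.smul_const (b - w)
        simpa using this
      have h3 := (tendsto_const_nhds (x := w) (f := Filter.atTop (α := ℕ))).add h2
      rw [hu]
      simpa using h3
    have hnorm : Filter.Tendsto (fun m => ‖iteratedDeriv j (dslope f w) (u m)‖)
        Filter.atTop (nhds ‖iteratedDeriv j (dslope f w) w‖) :=
      ((hcont.tendsto.comp hulim).norm)
    refine le_of_tendsto hnorm (Filter.Eventually.of_forall fun m => ?_)
    exact key (u m) (huB m) (hune m)
  · exact key w hw hwa

lemma one_le_prod_real {s : Finset ℕ} {g : ℕ → ℝ} (h : ∀ i ∈ s, 1 ≤ g i) :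
    1 ≤ ∏ i ∈ s, g i := by
  calc (1:ℝ) = ∏ _i ∈ s, 1 := by simp
    _ ≤ ∏ i ∈ s, g i := Finset.prod_le_prod (by simp) h

/-- Iterated divided-difference functions built from `dslope`. -/
def GIter (f : ℂ → ℂ) (x : ℕ → ℂ) : ℕ → ℂ → ℂ
  | 0 => f
  | k + 1 => dslope (GIter f x k) (x k)

lemma GIter_shift (f : ℂ → ℂ) (x : ℕ → ℂ) :
    ∀ k, GIter f x (k + 1) = GIter (dslope f (x 0)) (fun i => x (i + 1)) k := by
  intro k
  induction k with
  | zero => rfl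
  | succ k ih =>
    show dslope (GIter f x (k + 1)) (x (k + 1)) = _
    rw [ih]
    rfl

/-- Newton-form expansion identity. -/
lemma newton (f : ℂ → ℂ) (x : ℕ → ℂ) : ∀ (k : ℕ) (w : ℂ),
    f w = (∑ j ∈ Finset.range k, GIter f x j (x j) * ∏ l ∈ Finset.range j, (w - x l))
      + (∏ l ∈ Finset.range k, (w - x l)) * GIter f x k w := by
  intro k w
  induction k with
  | zero => simp [GIter]
  | succ k ih =>
    have hstep : GIter f x k w = GIter f x k (x k) + (w - x k) * GIter f x (k + 1) w := by
      have h := sub_smul_dslope (GIter f x k) (x k) w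
      rw [smul_eq_mul] at h
      have : GIter f x (k + 1) w = dslope (GIter f x k) (x k) w := rfl
      rw [this]
      linear_combination -h
    rw [Finset.sum_range_succ, Finset.prod_range_succ]
    linear_combination ih + (∏ l ∈ Finset.range k, (w - x l)) * hstep

/-- Main bound on the iterated divided differences. -/
lemma GIter_bound {U : Set ℂ} (hU : IsOpen U) (hBU : closedBall (0 : ℂ) 1 ⊆ U) :
    ∀ (k : ℕ) (f : ℂ → ℂ), DifferentiableOn ℂ f U → ∀ B : ℕ → ℝ,
      (∀ j : ℕ, ∀ w ∈ closedBall (0 : ℂ) 1, ‖iteratedDeriv j f w‖ ≤ B j) →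
      ∀ x : ℕ → ℂ, (∀ l, x l ∈ closedBall (0 : ℂ) 1) →
      ∀ w ∈ closedBall (0 : ℂ) 1,
        ‖GIter f x k w‖ ≤ (∏ l ∈ Finset.range k, (l.factorial : ℝ)) * B k := by
  intro k
  induction k with
  | zero =>
    intro f hf B hB x hx w hw
    simpa [GIter] using hB 0 w hw
  | succ k ih =>
    intro f hf B hB x hx w hw
    rw [GIter_shift]
    have hf1 : DifferentiableOn ℂ (dslope f (x 0)) U :=
      (Complex.differentiableOn_dslope (hU.mem_nhds (hBU (hx 0)))).mpr hf
    have hB1 : ∀ j : ℕ, ∀ w ∈ closedBall (0 : ℂ) 1,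
        ‖iteratedDeriv j (dslope f (x 0)) w‖ ≤ (j.factorial : ℝ) * B (j + 1) :=
      fun j => dslope_bound hU hBU hf (hx 0) j (hB (j + 1))
    have h := ih (dslope f (x 0)) hf1 (fun j => (j.factorial : ℝ) * B (j + 1)) hB1
      (fun i => x (i + 1)) (fun l => hx _) w hw
    calc ‖GIter (dslope f (x 0)) (fun i => x (i + 1)) k w‖
        ≤ (∏ l ∈ Finset.range k, (l.factorial : ℝ)) * ((k.factorial : ℝ) * B (k + 1)) := h
      _ = (∏ l ∈ Finset.range (k + 1), (l.factorial : ℝ)) * B (k + 1) := by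
          rw [Finset.prod_range_succ]; ring

/-- Maximum modulus: a function holomorphic on a neighborhood of the closed unit ball is
bounded on the closed ball by its sup on the unit sphere. -/
lemma sup_sphere_bound {U : Set ℂ} (hU : IsOpen U) (hBU : closedBall (0 : ℂ) 1 ⊆ U)
    {g : ℂ → ℂ} (hg : DifferentiableOn ℂ g U) :
    ∀ w ∈ closedBall (0 : ℂ) 1, ‖g w‖ ≤ sSup ((fun w => ‖g w‖) '' sphere (0 : ℂ) 1) := by
  intro w hw
  have hsub : sphere (0 : ℂ) 1 ⊆ U := fun ζ hζ => hBU (sphere_subset_closedBall hζ)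
  have hcont : ContinuousOn (fun w => ‖g w‖) (sphere (0 : ℂ) 1) :=
    (hg.continuousOn.mono hsub).norm
  have hbdd : BddAbove ((fun w => ‖g w‖) '' sphere (0 : ℂ) 1) :=
    ((isCompact_sphere (0:ℂ) 1).image_of_continuousOn hcont).bddAbove
  refine Complex.norm_le_of_forall_mem_frontier_norm_le (U := Metric.ball (0 : ℂ) 1)
    isBounded_ball ?_ ?_ ?_
  · refine DifferentiableOn.diffContOnCl ?_
    rw [closure_ball (0:ℂ) one_ne_zero]
    exact hg.mono hBU
  · intro ζ hζ
    rw [frontier_ball (0:ℂ) one_ne_zero] at hζ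
    exact le_csSup hbdd ⟨ζ, hζ, rfl⟩
  · rw [closure_ball (0:ℂ) one_ne_zero]
    exact hw

end DetBoundAux

end DetBoundAux

open DetBoundAux Metric Matrix in
/-- paper's Lemma 2.12: a determinant bound for holomorphic functions
evaluated at points of the unit circle. -/
theorem determinant_bound_of_analytic (n : ℕ) (hn : 1 ≤ n) :
    ∃ C : ℝ, 0 < C ∧
      ∀ f : Fin n → ℂ → ℂ,
        (∀ i, ∃ U : Set ℂ, IsOpen U ∧ Metric.closedBall (0 : ℂ) 1 ⊆ U ∧
            DifferentiableOn ℂ (f i) U) →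
        ∀ z : Fin n → ℂ, (∀ j, ‖z j‖ = 1) →
          ‖(Matrix.of fun i j : Fin n => f i (z j)).det‖ ≤
            C * (∏ p ∈ Finset.univ.filter (fun p : Fin n × Fin n => p.1 < p.2),
                  ‖z p.2 - z p.1‖) *
              ∏ i : Fin n,
                ⨆ j : Fin n,
                  sSup ((fun w : ℂ => ‖iteratedDeriv (j : ℕ) (f i) w‖) ''
                    Metric.sphere (0 : ℂ) 1) := by
  classical
  set c : ℕ → ℝ := fun k => ∏ l ∈ Finset.range k, (l.factorial : ℝ) with hc
  have hfac1 : ∀ i : ℕ, (1:ℝ) ≤ (i.factorial : ℝ) := fun i => by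
    exact_mod_cast Nat.one_le_iff_ne_zero.mpr (Nat.factorial_ne_zero i)
  have hc1 : ∀ k, 1 ≤ c k := by
    intro k
    simp only [hc]
    exact one_le_prod_real fun i _ => hfac1 i
  have hcmono : ∀ k, k ≤ n → c k ≤ c n := by
    intro k hk
    simp only [hc]
    rw [← Finset.prod_range_mul_prod_Ico (fun l => ((l.factorial : ℕ) : ℝ)) hk]
    have h1 : (1:ℝ) ≤ ∏ i ∈ Finset.Ico k n, ((i.factorial : ℕ) : ℝ) :=
      one_le_prod_real fun i _ => hfac1 i
    have h0 : (0:ℝ) ≤ ∏ l ∈ Finset.range k, ((l.factorial : ℕ) : ℝ) :=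
      le_trans zero_le_one (one_le_prod_real fun i _ => hfac1 i)
    exact le_mul_of_one_le_right h0 h1
  have hcpos : 0 < c n := lt_of_lt_of_le one_pos (hc1 n)
  have hCpos : 0 < (n.factorial : ℝ) * (c n) ^ n := by
    have : (0:ℝ) < (n.factorial : ℝ) := by exact_mod_cast n.factorial_pos
    exact mul_pos this (pow_pos hcpos n)
  refine ⟨(n.factorial : ℝ) * (c n) ^ n, hCpos, ?_⟩
  intro f hf z hz
  choose U hUopen hUball hUdiff using hf
  have hzB : ∀ j, z j ∈ Metric.closedBall (0:ℂ) 1 := by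
    intro j; rw [Metric.mem_closedBall, dist_zero_right, hz j]
  by_cases hinj : Function.Injective z
  swap
  · -- degenerate case: two equal nodes, both sides vanish
    rw [Function.Injective] at hinj
    push_neg at hinj
    obtain ⟨i, j, hzeq, hne⟩ := hinj
    obtain ⟨p, q, hpq, hzpq⟩ : ∃ p q : Fin n, p < q ∧ z p = z q := by
      rcases hne.lt_or_gt with h | h
      · exact ⟨i, j, h, hzeq⟩
      · exact ⟨j, i, h, hzeq.symm⟩
    have hdet : (Matrix.of fun i j : Fin n => f i (z j)).det = 0 :=
      Matrix.det_zero_of_column_eq hpq.ne (fun k => by simp [hzpq])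
    have hprod : (∏ p ∈ Finset.univ.filter (fun p : Fin n × Fin n => p.1 < p.2),
        ‖z p.2 - z p.1‖) = 0 :=
      Finset.prod_eq_zero (Finset.mem_filter.mpr ⟨Finset.mem_univ (p, q), hpq⟩)
        (by rw [hzpq]; simp)
    rw [hdet, hprod]
    simp
  · -- main case: distinct nodes
    set a : ℕ → ℂ := fun l => if h : l < n then z ⟨l, h⟩ else 0 with ha
    have haB : ∀ l, a l ∈ Metric.closedBall (0:ℂ) 1 := by
      intro l
      simp only [ha]
      split_ifs with h
      · exact hzB _
      · simp
    have haz : ∀ j : Fin n, a (j : ℕ) = z j := by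
      intro j
      simp only [ha]
      rw [dif_pos j.2]
    set B : Fin n → ℕ → ℝ := fun i j =>
      sSup ((fun w : ℂ => ‖iteratedDeriv j (f i) w‖) '' Metric.sphere (0:ℂ) 1) with hB
    have hBle : ∀ (i : Fin n) (j : ℕ), ∀ w ∈ Metric.closedBall (0:ℂ) 1,
        ‖iteratedDeriv j (f i) w‖ ≤ B i j := fun i j =>
      sup_sphere_bound (hUopen i) (hUball i)
        (iteratedDeriv_differentiableOn (hUopen i) (hUdiff i) j)
    have hBnn : ∀ i j, 0 ≤ B i j := by
      intro i j
      apply Real.sSup_nonneg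
      rintro x ⟨w, hw, rfl⟩
      positivity
    set Bsup : Fin n → ℝ := fun i => ⨆ j : Fin n, B i (j : ℕ) with hBsup
    have hBsuple : ∀ (i : Fin n) (k : Fin n), B i (k : ℕ) ≤ Bsup i := by
      intro i k
      simp only [hBsup]
      exact le_ciSup (Set.Finite.bddAbove (Set.finite_range (fun j : Fin n => B i (j : ℕ)))) k
    -- the matrices
    set A : Matrix (Fin n) (Fin n) ℂ :=
      Matrix.of (fun i k : Fin n => GIter (f i) a (k : ℕ) (a (k : ℕ))) with hA
    set N : Matrix (Fin n) (Fin n) ℂ :=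
      Matrix.of (fun k j : Fin n => ∏ l ∈ Finset.range (k : ℕ), (z j - a l)) with hN
    have hfact : (Matrix.of fun i j : Fin n => f i (z j)) = A * N := by
      ext i j
      rw [Matrix.mul_apply]
      have hnewton := newton (f i) a n (z j)
      have hzero : (∏ l ∈ Finset.range n, (z j - a l)) = 0 := by
        refine Finset.prod_eq_zero (Finset.mem_range.mpr j.2) ?_
        rw [haz j, sub_self]
      rw [Matrix.of_apply, hnewton, hzero, zero_mul, add_zero]
      rw [← Fin.sum_univ_eq_sum_range
        (fun k => GIter (f i) a k (a k) * ∏ l ∈ Finset.range k, (z j - a l)) n]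
      rfl
    -- determinant of N is the Vandermonde determinant
    set p : Fin n → Polynomial ℂ :=
      fun k => ∏ l ∈ Finset.range (k : ℕ), (Polynomial.X - Polynomial.C (a l)) with hp
    have hmonic : ∀ k, (p k).Monic := fun k =>
      Polynomial.monic_prod_of_monic _ _ fun l _ => Polynomial.monic_X_sub_C (a l)
    have hdeg : ∀ k : Fin n, (p k).natDegree = (k : ℕ) := by
      intro k
      rw [hp]
      simp only
      rw [Polynomial.natDegree_prod_of_monic _ _ fun l _ => Polynomial.monic_X_sub_C (a l)]
      simp [Polynomial.natDegree_X_sub_C]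
    have hNt : N = (Matrix.of fun i j : Fin n => (p j).eval (z i))ᵀ := by
      ext k j
      simp [hN, hp, Matrix.transpose_apply, Polynomial.eval_prod]
    have hdetN : N.det = ∏ i, ∏ j ∈ Finset.Ioi i, (z j - z i) := by
      rw [hNt, Matrix.det_transpose,
        ← Matrix.det_eval_matrixOfPolynomials_eq_det_vandermonde z p hdeg hmonic,
        Matrix.det_vandermonde]
    have hpairs : (∏ q ∈ Finset.univ.filter (fun q : Fin n × Fin n => q.1 < q.2),
        ‖z q.2 - z q.1‖) = ∏ i, ∏ j ∈ Finset.Ioi i, ‖z j - z i‖ := by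
      rw [Finset.prod_filter]
      rw [Fintype.prod_prod_type
        (f := fun q : Fin n × Fin n => if q.1 < q.2 then ‖z q.2 - z q.1‖ else 1)]
      refine Finset.prod_congr rfl fun i _ => ?_
      rw [← Finset.prod_filter]
      congr 1
      ext j
      simp [Finset.mem_Ioi]
    have hdetNnorm : ‖N.det‖ = ∏ q ∈ Finset.univ.filter
        (fun q : Fin n × Fin n => q.1 < q.2), ‖z q.2 - z q.1‖ := by
      rw [hdetN, hpairs, norm_prod]
      exact Finset.prod_congr rfl fun i _ => norm_prod _ _
    -- entrywise bound on A
    have hAle : ∀ (i k : Fin n), ‖A i k‖ ≤ c n * Bsup i := by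
      intro i k
      have h1 := GIter_bound (hUopen i) (hUball i) (k : ℕ) (f i) (hUdiff i) (B i) (hBle i)
        a haB (a (k : ℕ)) (haB (k : ℕ))
      have h2 : c (k : ℕ) * B i (k : ℕ) ≤ c n * Bsup i :=
        mul_le_mul (hcmono _ k.2.le) (hBsuple i k) (hBnn i _)
          (le_trans zero_le_one (hc1 n))
      exact le_trans h1 h2
    have hdetA : ‖A.det‖ ≤ (n.factorial : ℝ) * ∏ i, (c n * Bsup i) := by
      rw [Matrix.det_apply]
      refine le_trans (norm_sum_le _ _) ?_
      have hterm : ∀ σ : Equiv.Perm (Fin n),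
          ‖Equiv.Perm.sign σ • ∏ i, A (σ i) i‖ ≤ ∏ i, (c n * Bsup i) := by
        intro σ
        have hsgn : ‖Equiv.Perm.sign σ • ∏ i, A (σ i) i‖ = ‖∏ i, A (σ i) i‖ := by
          rcases Int.units_eq_one_or (Equiv.Perm.sign σ) with h | h <;>
            rw [h] <;> simp [Units.smul_def]
        rw [hsgn, norm_prod]
        calc ∏ i, ‖A (σ i) i‖ ≤ ∏ i, (c n * Bsup (σ i)) :=
              Finset.prod_le_prod (fun _ _ => norm_nonneg _) (fun i _ => hAle (σ i) i)
          _ = ∏ i, (c n * Bsup i) := Equiv.prod_comp σ (fun i => c n * Bsup i)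
      refine le_trans (Finset.sum_le_sum fun σ _ => hterm σ) ?_
      rw [Finset.sum_const, Finset.card_univ, Fintype.card_perm, Fintype.card_fin,
        nsmul_eq_mul]
    calc ‖(Matrix.of fun i j : Fin n => f i (z j)).det‖
        = ‖A.det‖ * ‖N.det‖ := by rw [hfact, Matrix.det_mul, norm_mul]
      _ ≤ ((n.factorial : ℝ) * ∏ i, (c n * Bsup i)) * ‖N.det‖ :=
          mul_le_mul_of_nonneg_right hdetA (norm_nonneg _)
      _ = (n.factorial : ℝ) * (c n) ^ n *
            (∏ q ∈ Finset.univ.filter (fun q : Fin n × Fin n => q.1 < q.2),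
              ‖z q.2 - z q.1‖) * ∏ i, Bsup i := by
          rw [hdetNnorm, Finset.prod_mul_distrib, Finset.prod_const, Finset.card_univ,
            Fintype.card_fin]
          ring
end

section
/- For every integer n ≥ 1 there exists a constant C > 0, depending only on n, such that for all integers m_1, …, m_n and all points z_1, …, z_n on the unit circle of ℂ: |det( z_j^{m_i} )_{1≤i,j≤n}| ≤ C · ∏_{1≤i<j≤n} |z_j − z_i| · ∏_{i=1}^{n} (1 + |m_i|)^{n−1}, where z^{m} denotes the m-th integer power of z. -/
namespace DetBound

open Finset

noncomputable def l1 (M : ℕ) (c : ℤ → ℂ) : ℝ := ∑ k ∈ Finset.Icc (-(M:ℤ)) (M:ℤ), ‖c k‖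

noncomputable def evalL (M : ℕ) (c : ℤ → ℂ) (z : ℂ) : ℂ :=
  ∑ k ∈ Finset.Icc (-(M:ℤ)) (M:ℤ), c k * z ^ k

noncomputable def gam (a : ℂ) (k s : ℤ) : ℂ :=
  if 0 ≤ s ∧ s < k then a ^ (k - 1 - s)
  else if k ≤ s ∧ s < 0 then -a ^ (k - 1 - s) else 0

noncomputable def delta (M : ℕ) (a : ℂ) (c : ℤ → ℂ) : ℤ → ℂ :=
  fun s => ∑ k ∈ Finset.Icc (-(M:ℤ)) (M:ℤ), c k * gam a k s

lemma l1_nonneg (M : ℕ) (c : ℤ → ℂ) : 0 ≤ l1 M c :=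
  Finset.sum_nonneg fun _ _ => norm_nonneg _

lemma norm_evalL_le (M : ℕ) (c : ℤ → ℂ) {z : ℂ} (hz : ‖z‖ = 1) :
    ‖evalL M c z‖ ≤ l1 M c := by
  refine (norm_sum_le _ _).trans ?_
  refine Finset.sum_le_sum fun k _ => ?_
  rw [norm_mul, norm_zpow, hz, one_zpow, mul_one]

lemma gam_key (M : ℕ) {a z : ℂ} (ha : a ≠ 0) (hz : z ≠ 0) {k : ℤ}
    (hk : k ∈ Finset.Icc (-(M:ℤ)) (M:ℤ)) :
    (z - a) * ∑ s ∈ Finset.Icc (-(M:ℤ)) (M:ℤ), gam a k s * z ^ s = z ^ k - a ^ k := by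
  simp only [Finset.mem_Icc] at hk
  rcases le_or_gt 0 k with hk0 | hk0
  · -- k ≥ 0
    have h1 : ∑ s ∈ Finset.Icc (-(M:ℤ)) (M:ℤ), gam a k s * z ^ s
        = ∑ s ∈ Finset.Ico (0:ℤ) k, a ^ (k - 1 - s) * z ^ s := by
      rw [← Finset.sum_filter_of_ne (p := fun s => 0 ≤ s ∧ s < k)]
      · refine Finset.sum_congr ?_ fun s hs => ?_
        · ext s; simp only [Finset.mem_filter, Finset.mem_Icc, Finset.mem_Ico]; omega
        · simp only [Finset.mem_Ico] at hs
          simp [gam, hs.1, hs.2]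
      · intro s _ hne
        by_contra hc
        apply hne
        have h2 : ¬ (k ≤ s ∧ s < 0) := by omega
        simp [gam, hc, h2]
    have h2 : ∑ s ∈ Finset.Ico (0:ℤ) k, a ^ (k - 1 - s) * z ^ s
        = ∑ t ∈ Finset.range k.toNat, z ^ t * a ^ (k.toNat - 1 - t) := by
      refine Finset.sum_nbij' (fun s => s.toNat) (fun t => (t : ℤ)) ?_ ?_ ?_ ?_ ?_
      · intro s hs; simp only [Finset.mem_Ico] at hs; simp only [Finset.mem_range]; omega
      · intro t ht; simp only [Finset.mem_range] at ht; simp only [Finset.mem_Ico]; omega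
      · intro s hs; simp only [Finset.mem_Ico] at hs; omega
      · intro t ht; simp only [Finset.mem_range] at ht; omega
      · intro s hs
        simp only [Finset.mem_Ico] at hs
        have e1 : a ^ (k - 1 - s) = a ^ (k.toNat - 1 - s.toNat : ℕ) := by
          rw [← zpow_natCast a]; congr 1; omega
        have e2 : z ^ s = z ^ (s.toNat : ℕ) := by
          rw [← zpow_natCast z]; congr 1; omega
        rw [e1, e2]; ring
    rw [h1, h2, mul_comm (z - a), geom_sum₂_mul, ← zpow_natCast z, ← zpow_natCast a]
    have e3 : ((k.toNat : ℕ) : ℤ) = k := by omega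
    rw [e3]
  · -- k < 0
    have h1 : ∑ s ∈ Finset.Icc (-(M:ℤ)) (M:ℤ), gam a k s * z ^ s
        = ∑ s ∈ Finset.Ico k (0:ℤ), -a ^ (k - 1 - s) * z ^ s := by
      rw [← Finset.sum_filter_of_ne (p := fun s => k ≤ s ∧ s < 0)]
      · refine Finset.sum_congr ?_ fun s hs => ?_
        · ext s; simp only [Finset.mem_filter, Finset.mem_Icc, Finset.mem_Ico]; omega
        · simp only [Finset.mem_Ico] at hs
          have h2 : ¬ (0 ≤ s ∧ s < k) := by omega
          simp [gam, hs.1, hs.2, h2]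
      · intro s _ hne
        by_contra hc
        apply hne
        have h2 : ¬ (0 ≤ s ∧ s < k) := by omega
        simp [gam, hc, h2]
    have h2 : ∑ s ∈ Finset.Ico k (0:ℤ), -a ^ (k - 1 - s) * z ^ s
        = -(a ^ k * z ^ k) * ∑ t ∈ Finset.range ((-k).toNat), z ^ t * a ^ ((-k).toNat - 1 - t) := by
      rw [Finset.mul_sum]
      refine Finset.sum_nbij' (fun s => (s - k).toNat) (fun t => k + (t : ℤ)) ?_ ?_ ?_ ?_ ?_
      · intro s hs; simp only [Finset.mem_Ico] at hs; simp only [Finset.mem_range]; omega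
      · intro t ht; simp only [Finset.mem_range] at ht; simp only [Finset.mem_Ico]; omega
      · intro s hs; simp only [Finset.mem_Ico] at hs; omega
      · intro t ht; simp only [Finset.mem_range] at ht; omega
      · intro s hs
        simp only [Finset.mem_Ico] at hs
        have e1 : z ^ ((s - k).toNat : ℕ) = z ^ (s - k) := by
          rw [← zpow_natCast z]; congr 1; omega
        have e2 : a ^ ((-k).toNat - 1 - (s - k).toNat : ℕ) = a ^ (-k - 1 - (s - k)) := by
          rw [← zpow_natCast a]; congr 1; omega
        rw [e1, e2]
        rw [show (k - 1 - s : ℤ) = k + (-k - 1 - (s - k)) by ring,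
          show (s : ℤ) = k + (s - k) by ring, zpow_add₀ ha, zpow_add₀ hz]
        ring
    rw [h1, h2]
    rw [show (z - a) * (-(a ^ k * z ^ k) * ∑ t ∈ Finset.range ((-k).toNat), z ^ t * a ^ ((-k).toNat - 1 - t))
        = -(a ^ k * z ^ k) * ((∑ t ∈ Finset.range ((-k).toNat), z ^ t * a ^ ((-k).toNat - 1 - t)) * (z - a)) by ring,
      geom_sum₂_mul, ← zpow_natCast z ((-k).toNat), ← zpow_natCast a ((-k).toNat)]
    have e3 : (((-k).toNat : ℕ) : ℤ) = -k := by omega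
    rw [e3]
    have h3 : z ^ k * z ^ (-k) = 1 := by rw [← zpow_add₀ hz]; simp
    have h4 : a ^ k * a ^ (-k) = 1 := by rw [← zpow_add₀ ha]; simp
    linear_combination (-(a ^ k)) * h3 + (z ^ k) * h4


lemma evalL_sub (M : ℕ) (c : ℤ → ℂ) {a z : ℂ} (ha : a ≠ 0) (hz : z ≠ 0) :
    evalL M c z - evalL M c a = (z - a) * evalL M (delta M a c) z := by
  unfold evalL delta
  have h1 : (z - a) * ∑ s ∈ Finset.Icc (-(M:ℤ)) (M:ℤ),
      (∑ k ∈ Finset.Icc (-(M:ℤ)) (M:ℤ), c k * gam a k s) * z ^ s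
      = ∑ k ∈ Finset.Icc (-(M:ℤ)) (M:ℤ),
          c k * ((z - a) * ∑ s ∈ Finset.Icc (-(M:ℤ)) (M:ℤ), gam a k s * z ^ s) := by
    simp only [Finset.mul_sum, Finset.sum_mul]
    rw [Finset.sum_comm]
    refine Finset.sum_congr rfl fun k _ => ?_
    refine Finset.sum_congr rfl fun s _ => ?_
    ring
  rw [h1]
  have h2 : ∑ k ∈ Finset.Icc (-(M:ℤ)) (M:ℤ),
      c k * ((z - a) * ∑ s ∈ Finset.Icc (-(M:ℤ)) (M:ℤ), gam a k s * z ^ s)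
      = ∑ k ∈ Finset.Icc (-(M:ℤ)) (M:ℤ), c k * (z ^ k - a ^ k) :=
    Finset.sum_congr rfl fun k hk => by rw [gam_key M ha hz hk]
  rw [h2]
  simp only [mul_sub]
  rw [Finset.sum_sub_distrib]

lemma norm_gam_le (a : ℂ) (ha : ‖a‖ = 1) (k s : ℤ) :
    ‖gam a k s‖ = if (0 ≤ s ∧ s < k) ∨ (k ≤ s ∧ s < 0) then 1 else 0 := by
  unfold gam
  by_cases h1 : 0 ≤ s ∧ s < k
  · simp [h1, norm_zpow, ha]
  · by_cases h2 : k ≤ s ∧ s < 0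
    · simp [h1, h2, norm_zpow, ha]
    · simp [h1, h2]

lemma l1_delta_le (M : ℕ) (c : ℤ → ℂ) {a : ℂ} (ha : ‖a‖ = 1) :
    l1 M (delta M a c) ≤ (M : ℝ) * l1 M c := by
  unfold l1 delta
  have step1 : ∀ s : ℤ, ‖∑ k ∈ Finset.Icc (-(M:ℤ)) (M:ℤ), c k * gam a k s‖
      ≤ ∑ k ∈ Finset.Icc (-(M:ℤ)) (M:ℤ), ‖c k‖ * ‖gam a k s‖ := by
    intro s
    refine (norm_sum_le _ _).trans ?_
    refine Finset.sum_le_sum fun k _ => ?_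
    rw [norm_mul]
  calc ∑ s ∈ Finset.Icc (-(M:ℤ)) (M:ℤ), ‖∑ k ∈ Finset.Icc (-(M:ℤ)) (M:ℤ), c k * gam a k s‖
      ≤ ∑ s ∈ Finset.Icc (-(M:ℤ)) (M:ℤ), ∑ k ∈ Finset.Icc (-(M:ℤ)) (M:ℤ), ‖c k‖ * ‖gam a k s‖ :=
        Finset.sum_le_sum fun s _ => step1 s
    _ = ∑ k ∈ Finset.Icc (-(M:ℤ)) (M:ℤ), ∑ s ∈ Finset.Icc (-(M:ℤ)) (M:ℤ), ‖c k‖ * ‖gam a k s‖ :=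
        Finset.sum_comm
    _ ≤ ∑ k ∈ Finset.Icc (-(M:ℤ)) (M:ℤ), ‖c k‖ * (M : ℝ) := by
        refine Finset.sum_le_sum fun k hk => ?_
        rw [← Finset.mul_sum]
        refine mul_le_mul_of_nonneg_left ?_ (norm_nonneg _)
        simp only [Finset.mem_Icc] at hk
        have hgs : ∀ s : ℤ, ‖gam a k s‖ = if (0 ≤ s ∧ s < k) ∨ (k ≤ s ∧ s < 0) then 1 else 0 :=
          norm_gam_le a ha k
        calc ∑ s ∈ Finset.Icc (-(M:ℤ)) (M:ℤ), ‖gam a k s‖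
            = ∑ s ∈ Finset.Icc (-(M:ℤ)) (M:ℤ),
                (if (0 ≤ s ∧ s < k) ∨ (k ≤ s ∧ s < 0) then (1:ℝ) else 0) :=
              Finset.sum_congr rfl fun s _ => hgs s
          _ = ((Finset.Icc (-(M:ℤ)) (M:ℤ)).filter
                (fun s => (0 ≤ s ∧ s < k) ∨ (k ≤ s ∧ s < 0))).card := by
              rw [Finset.sum_boole]
          _ ≤ ((Finset.Ico (min k 0) (max k 0)).card : ℝ) := by
              have hsub : (Finset.Icc (-(M:ℤ)) (M:ℤ)).filter
                  (fun s => (0 ≤ s ∧ s < k) ∨ (k ≤ s ∧ s < 0)) ⊆ Finset.Ico (min k 0) (max k 0) := by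
                intro s hs
                simp only [Finset.mem_filter, Finset.mem_Icc, Finset.mem_Ico] at hs ⊢
                omega
              exact_mod_cast Nat.cast_le.mpr (Finset.card_le_card hsub)
          _ ≤ (M : ℝ) := by
              rw [Int.card_Ico]
              have : (max k 0 - min k 0).toNat ≤ M := by omega
              exact_mod_cast this
    _ = (M : ℝ) * ∑ k ∈ Finset.Icc (-(M:ℤ)) (M:ℤ), ‖c k‖ := by rw [Finset.mul_sum]; exact Finset.sum_congr rfl fun k _ => mul_comm _ _


lemma key : ∀ (n : ℕ) (Mf : Fin n → ℕ) (c : Fin n → ℤ → ℂ) (z : Fin n → ℂ),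
    (∀ i, 1 ≤ Mf i) → (∀ j, ‖z j‖ = 1) →
    ‖(Matrix.of fun i j => evalL (Mf i) (c i) (z j)).det‖ ≤
      (n.factorial : ℝ) * (∏ i, ∏ j ∈ Ioi i, ‖z j - z i‖) *
        ∏ i, (l1 (Mf i) (c i) * (Mf i : ℝ) ^ (n - 1)) := by
  intro n
  induction n with
  | zero =>
    intro Mf c z hM hz
    simp [Matrix.det_fin_zero]
  | succ n ih =>
    intro Mf c z hM hz
    have hz0 : ∀ j, z j ≠ 0 := by
      intro j h
      have := hz j
      rw [h, norm_zero] at this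
      norm_num at this
    have ha1 : ‖z 0‖ = 1 := hz 0
    have ha0 : z 0 ≠ 0 := hz0 0
    set A : Matrix (Fin (n+1)) (Fin (n+1)) ℂ :=
      Matrix.of fun i j => evalL (Mf i) (c i) (z j) with hA
    set E : Matrix (Fin (n+1)) (Fin (n+1)) ℂ :=
      Matrix.of fun j k => if j = k then 1 else if j = 0 then -1 else 0 with hEdef
    have hdetE : E.det = 1 := by
      rw [Matrix.det_of_upperTriangular]
      · simp [hEdef]
      · intro i j hij
        have h1 : i ≠ j := ne_of_gt hij
        have h2 : i ≠ 0 := (lt_of_le_of_lt (Fin.zero_le j) hij).ne'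
        simp [hEdef, h1, h2]
    set D : Fin (n+1) → (ℤ → ℂ) := fun i => delta (Mf i) (z 0) (c i) with hD
    set B : Matrix (Fin (n+1)) (Fin (n+1)) ℂ :=
      Matrix.of fun i k =>
        if k = 0 then evalL (Mf i) (c i) (z 0) else evalL (Mf i) (D i) (z k) with hB
    have hAE : A * E = Matrix.of fun i k => (if k = 0 then 1 else z k - z 0) * B i k := by
      ext i k
      rw [Matrix.mul_apply]
      by_cases hk : k = 0
      · subst hk
        rw [Finset.sum_eq_single 0]
        · simp [hA, hEdef, hB]
        · intro j _ hj
          simp [hEdef, hj]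
        · intro h; exact absurd (Finset.mem_univ 0) h
      · have hterm : ∀ j, A i j * E j k
            = (if k = j then A i k else 0) + (if 0 = j then -(A i 0) else 0) := by
          intro j
          simp only [hEdef, Matrix.of_apply]
          by_cases h1 : j = k
          · rw [h1, if_pos rfl, if_pos rfl, if_neg (fun h => hk h.symm), mul_one, add_zero]
          · by_cases h2 : j = 0
            · rw [h2, if_neg (fun h => hk h.symm), if_pos rfl, if_neg hk, if_pos rfl]
              ring
            · rw [if_neg h1, if_neg h2, if_neg (fun h => h1 h.symm),
                if_neg (fun h => h2 h.symm), mul_zero, add_zero]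
        rw [Finset.sum_congr rfl fun j _ => hterm j, Finset.sum_add_distrib,
          Finset.sum_ite_eq, Finset.sum_ite_eq]
        simp only [Finset.mem_univ, if_true]
        have hsub := evalL_sub (Mf i) (c i) ha0 (hz0 k)
        simp only [Matrix.of_apply, hA, hB, if_neg hk]
        rw [← sub_eq_add_neg]
        exact hsub
    have hdet1 : ‖A.det‖ = ‖(A * E).det‖ := by
      rw [Matrix.det_mul, hdetE, mul_one]
    set u : Fin (n+1) → ℂ := fun k => if k = 0 then 1 else z k - z 0 with hu
    have hdet2 : (A * E).det = (∏ k, u k) * B.det := by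
      rw [hAE]
      exact Matrix.det_mul_row u B
    set P1 : ℝ := ∏ i : Fin n, ‖z i.succ - z 0‖ with hP1
    set P2 : ℝ := ∏ p : Fin n, ∏ q ∈ Ioi p, ‖z q.succ - z p.succ‖ with hP2
    have hP1nn : 0 ≤ P1 := Finset.prod_nonneg fun _ _ => norm_nonneg _
    have hP2nn : 0 ≤ P2 := Finset.prod_nonneg fun _ _ =>
      Finset.prod_nonneg fun _ _ => norm_nonneg _
    have hnormu : ‖∏ k, u k‖ = P1 := by
      rw [norm_prod, Fin.prod_univ_succ]
      simp only [hu, if_pos rfl, norm_one, one_mul]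
      exact Finset.prod_congr rfl fun i _ => by
        simp [Fin.succ_ne_zero]
    have hpairs : (∏ i : Fin (n+1), ∏ j ∈ Ioi i, ‖z j - z i‖) = P1 * P2 := by
      rw [Fin.prod_univ_succ, Fin.prod_Ioi_zero]
      congr 1
      exact Finset.prod_congr rfl fun i _ => by rw [Fin.prod_Ioi_succ]
    set L : Fin (n+1) → ℝ := fun i => l1 (Mf i) (c i) with hL
    set G : Fin (n+1) → ℝ := fun i => L i * (Mf i : ℝ) ^ n with hG
    have hLnn : ∀ i, 0 ≤ L i := fun i => l1_nonneg _ _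
    have hGnn : ∀ i, 0 ≤ G i := fun i =>
      mul_nonneg (hLnn i) (pow_nonneg (Nat.cast_nonneg _) _)
    have hminor : ∀ i : Fin (n+1),
        ‖(B.submatrix i.succAbove Fin.succ).det‖ ≤
          (n.factorial : ℝ) * P2 * ∏ p : Fin n, G (i.succAbove p) := by
      intro i
      have hmeq : B.submatrix i.succAbove Fin.succ =
          Matrix.of fun p q : Fin n =>
            evalL (Mf (i.succAbove p)) (D (i.succAbove p)) (z (Fin.succ q)) := by
        ext p q
        simp [hB, Matrix.submatrix_apply, Fin.succ_ne_zero]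
      rw [hmeq]
      have h1 := ih (fun p => Mf (i.succAbove p)) (fun p => D (i.succAbove p))
        (fun q => z (Fin.succ q)) (fun p => hM _) (fun q => hz _)
      refine h1.trans ?_
      have hQ : (∏ p : Fin n, (l1 (Mf (i.succAbove p)) (D (i.succAbove p)) *
          ((Mf (i.succAbove p) : ℝ)) ^ (n - 1))) ≤ ∏ p : Fin n, G (i.succAbove p) := by
        refine Finset.prod_le_prod (fun p _ => ?_) (fun p _ => ?_)
        · exact mul_nonneg (l1_nonneg _ _) (pow_nonneg (Nat.cast_nonneg _) _)
        · have hp : 0 < n := p.pos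
          have hstep := l1_delta_le (Mf (i.succAbove p)) (c (i.succAbove p)) ha1
          have h2 : l1 (Mf (i.succAbove p)) (D (i.succAbove p)) *
              ((Mf (i.succAbove p) : ℝ)) ^ (n - 1)
              ≤ ((Mf (i.succAbove p) : ℝ) * l1 (Mf (i.succAbove p)) (c (i.succAbove p))) *
                ((Mf (i.succAbove p) : ℝ)) ^ (n - 1) :=
            mul_le_mul_of_nonneg_right hstep (pow_nonneg (Nat.cast_nonneg _) _)
          refine h2.trans (le_of_eq ?_)
          have h3 : ((Mf (i.succAbove p) : ℝ)) ^ n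
              = ((Mf (i.succAbove p) : ℝ)) ^ (n - 1) * (Mf (i.succAbove p) : ℝ) := by
            rw [← pow_succ]
            congr 1
            omega
          simp only [hG, hL]
          rw [h3]
          ring
      exact mul_le_mul_of_nonneg_left hQ (mul_nonneg (Nat.cast_nonneg _) hP2nn)
    have hBdet : ‖B.det‖ ≤ ((n:ℝ)+1) * ((n.factorial : ℝ) * P2 * ∏ i, G i) := by
      rw [Matrix.det_succ_column_zero]
      refine (norm_sum_le _ _).trans ?_
      have hterm : ∀ i : Fin (n+1),
          ‖(-1 : ℂ) ^ (i : ℕ) * B i 0 * (B.submatrix i.succAbove Fin.succ).det‖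
            ≤ (n.factorial : ℝ) * P2 * ∏ i', G i' := by
        intro i
        rw [norm_mul, norm_mul, norm_pow, norm_neg, norm_one, one_pow, one_mul]
        have hB0 : ‖B i 0‖ ≤ L i := by
          simp only [hB, Matrix.of_apply, if_pos rfl]
          exact norm_evalL_le _ _ ha1
        have h2 : ‖B i 0‖ * ‖(B.submatrix i.succAbove Fin.succ).det‖
            ≤ L i * ((n.factorial : ℝ) * P2 * ∏ p : Fin n, G (i.succAbove p)) :=
          mul_le_mul hB0 (hminor i) (norm_nonneg _) (hLnn i)
        refine h2.trans ?_
        have hMi : (1 : ℝ) ≤ (Mf i : ℝ) ^ n := by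
          have h4 : (1:ℝ) ≤ (Mf i : ℝ) := by exact_mod_cast hM i
          calc (1:ℝ) = 1 ^ n := (one_pow n).symm
            _ ≤ (Mf i : ℝ) ^ n := pow_le_pow_left₀ zero_le_one h4 n
        have h3 : L i * ∏ p : Fin n, G (i.succAbove p) ≤ ∏ i', G i' := by
          rw [Fin.prod_univ_succAbove G i]
          refine mul_le_mul_of_nonneg_right ?_
            (Finset.prod_nonneg fun p _ => hGnn _)
          calc L i = L i * 1 := (mul_one _).symm
            _ ≤ L i * (Mf i : ℝ) ^ n := mul_le_mul_of_nonneg_left hMi (hLnn i)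
            _ = G i := rfl
        have h4 : L i * ((n.factorial : ℝ) * P2 * ∏ p : Fin n, G (i.succAbove p))
            = ((n.factorial : ℝ) * P2) * (L i * ∏ p : Fin n, G (i.succAbove p)) := by ring
        rw [h4]
        exact mul_le_mul_of_nonneg_left h3 (mul_nonneg (Nat.cast_nonneg _) hP2nn)
      refine (Finset.sum_le_sum fun i _ => hterm i).trans ?_
      rw [Finset.sum_const, Finset.card_univ, Fintype.card_fin, nsmul_eq_mul]
      push_cast
      exact le_refl _
    rw [hdet1, hdet2, norm_mul, hnormu, hpairs]
    have hfac : ((n+1 : ℕ).factorial : ℝ) = ((n:ℝ)+1) * (n.factorial : ℝ) := by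
      rw [Nat.factorial_succ]
      push_cast
      ring
    have hfinal : P1 * ‖B.det‖ ≤ ((n+1 : ℕ).factorial : ℝ) * (P1 * P2) * ∏ i, G i := by
      refine (mul_le_mul_of_nonneg_left hBdet hP1nn).trans (le_of_eq ?_)
      rw [hfac]
      ring
    refine hfinal.trans (le_of_eq ?_)
    have hGG : ∏ i, G i = ∏ i, (l1 (Mf i) (c i) * (Mf i : ℝ) ^ (n + 1 - 1)) := by
      refine Finset.prod_congr rfl fun i _ => ?_
      simp only [hG, hL, Nat.add_sub_cancel]
    rw [hGG]

lemma prod_pairs {n : ℕ} (f : Fin n → Fin n → ℝ) :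
    ∏ p ∈ Finset.univ.filter (fun p : Fin n × Fin n => p.1 < p.2), f p.1 p.2
      = ∏ i, ∏ j ∈ Ioi i, f i j :=
  Finset.prod_finset_product' _ _ _ (by simp)


end DetBound

open scoped BigOperators

/-- determinant bound for Laurent monomials at points of the unit circle. -/
theorem determinant_bound_monomials (n : ℕ) (hn : 1 ≤ n) :
    ∃ C : ℝ, 0 < C ∧
      ∀ (m : Fin n → ℤ) (z : Fin n → ℂ), (∀ j, ‖z j‖ = 1) →
        ‖(Matrix.of fun i j : Fin n => z j ^ m i).det‖ ≤
          C * (∏ p ∈ Finset.univ.filter (fun p : Fin n × Fin n => p.1 < p.2),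
                ‖z p.2 - z p.1‖) *
            ∏ i : Fin n, (1 + |(m i : ℝ)|) ^ (n - 1) := by
  refine ⟨(n.factorial : ℝ), by exact_mod_cast n.factorial_pos, ?_⟩
  intro m z hz
  set Mf : Fin n → ℕ := fun i => 1 + (m i).natAbs with hMf
  set c : Fin n → ℤ → ℂ := fun i k => if k = m i then 1 else 0 with hc
  have hmem : ∀ i, m i ∈ Finset.Icc (-(Mf i : ℤ)) (Mf i : ℤ) := by
    intro i
    simp only [Finset.mem_Icc, hMf]
    omega
  have heval : ∀ i (w : ℂ), DetBound.evalL (Mf i) (c i) w = w ^ m i := by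
    intro i w
    unfold DetBound.evalL
    rw [Finset.sum_eq_single (m i)]
    · simp [hc]
    · intro k _ hne
      simp [hc, hne]
    · intro h
      exact absurd (hmem i) h
  have hl1 : ∀ i, DetBound.l1 (Mf i) (c i) = 1 := by
    intro i
    unfold DetBound.l1
    rw [Finset.sum_eq_single (m i)]
    · simp [hc]
    · intro k _ hne
      simp [hc, hne]
    · intro h
      exact absurd (hmem i) h
  have hmat : (Matrix.of fun i j : Fin n => z j ^ m i)
      = Matrix.of fun i j => DetBound.evalL (Mf i) (c i) (z j) := by
    ext i j
    simp [heval]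
  rw [hmat]
  have hkey := DetBound.key n Mf c z (fun i => Nat.le_add_right 1 _) hz
  refine hkey.trans (le_of_eq ?_)
  rw [DetBound.prod_pairs (fun i j => ‖z j - z i‖)]
  congr 1
  refine Finset.prod_congr rfl fun i _ => ?_
  rw [hl1 i, one_mul]
  congr 1
  simp only [hMf]
  push_cast [Nat.cast_natAbs]
  ring
end
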